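/- Splitting formula: Let g be a symmetric integrable kernel on T^d and V admissible, with equilibrium measure μ_∞ minimizing E_V(μ) = ∬ g(x−y) dμ⊗μ + ∫ V dμ, satisfying the first-order condition 2h(μ_∞) + V − c_∞ = ζ_∞ ≥ 0 with equality on the support. Then for every pairwise-distinct configuration X_N = (x_1,…,x_N) ∈ T^{d×N}, the Hamiltonian H_N(X_N) = Σ_{i≠j} g(x_i−x_j) + N Σ_i V(x_i) satisfies H_N(X_N) = N²( E_V(μ_∞) + F_N(X_N, μ_∞) + ∫ ζ_∞ d emp_N ), where emp_N = (1/N)Σ_i δ_{x_i} and F_N(X_N, μ) = ∬_{Δ^c} g(x−y) d(μ − emp_N)⊗(μ − emp_N). -/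

import Mathlib

open scoped BigOperators
open MeasureTheory

/-- Interaction energy `E(μ) = ∬ g(x−y) dμ(x)dμ(y)`. -/
noncomputable def energy {α : Type*} [MeasurableSpace α] [Sub α]
    (g : α → ℝ) (μ : Measure α) : ℝ :=
  ∫ p : α × α, g (p.1 - p.2) ∂(μ.prod μ)

/-- Potential `h(μ)(x) = (g ∗ μ)(x) = ∫ g(x−y) dμ(y)`. -/
noncomputable def pot {α : Type*} [MeasurableSpace α] [Sub α]
    (g : α → ℝ) (μ : Measure α) (x : α) : ℝ :=
  ∫ y, g (x - y) ∂μ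

/-- Hamiltonian `H_N(X) = ∑_{i≠j} g(x_i − x_j) + N ∑_i V(x_i)`. -/
noncomputable def Ham {α : Type*} [Sub α] (g V : α → ℝ) (N : ℕ) (X : Fin N → α) : ℝ :=
  (∑ i, ∑ j, if i = j then 0 else g (X i - X j)) + N * ∑ i, V (X i)

/-- `F_N(X, μ) = E^{≠}(μ − emp_N)`, the off-diagonal energy of `μ − (1/N)∑δ_{x_i}`,
expanded as `E(μ) − (2/N)∑_i h(μ)(x_i) + (1/N²)∑_{i≠j} g(x_i−x_j)`. -/
noncomputable def FN {α : Type*} [MeasurableSpace α] [Sub α]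
    (g : α → ℝ) (μ : Measure α) (N : ℕ) (X : Fin N → α) : ℝ :=
  energy g μ - (2 / N) * ∑ i, pot g μ (X i)
    + (1 / (N : ℝ) ^ 2) * ∑ i, ∑ j, if i = j then 0 else g (X i - X j)

/-- Splitting formula: if the equilibrium measure `μ` satisfies the first-order condition
`ζ = 2h(μ) + V − cEq ≥ 0` with `∫ ζ dμ = 0`, then for every pairwise-distinct
configuration `X`, `H_N(X) = N²( E_V(μ) + F_N(X, μ) + ∫ ζ d emp_N )`. -/
theorem splitting_formula
    (d N : ℕ) (hN : 0 < N) (T : ℝ) [Fact (0 < T)]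
    (g V : (Fin d → AddCircle T) → ℝ)
    (hgsymm : ∀ x, g (-x) = g x)
    (μ : Measure (Fin d → AddCircle T)) [IsProbabilityMeasure μ]
    (cEq : ℝ)
    (hg_int : Integrable
      (fun p : (Fin d → AddCircle T) × (Fin d → AddCircle T) => g (p.1 - p.2)) (μ.prod μ))
    (hV_int : Integrable V μ)
    (hpot_int : Integrable (pot g μ) μ)
    (hgx_int : ∀ x, Integrable (fun y => g (x - y)) μ)
    (hζ_nonneg : ∀ x, 0 ≤ 2 * pot g μ x + V x - cEq)
    (hζ_zero : ∫ x, (2 * pot g μ x + V x - cEq) ∂μ = 0)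
    (X : Fin N → (Fin d → AddCircle T))
    (hdist : ∀ i j, i ≠ j → X i ≠ X j) :
    Ham g V N X
      = (N : ℝ) ^ 2 * ((energy g μ + ∫ x, V x ∂μ) + FN g μ N X
          + (1 / N) * ∑ i, (2 * pot g μ (X i) + V (X i) - cEq)) := by
  have hNpos : (0:ℝ) < N := Nat.cast_pos.mpr hN
  have hE : ∫ x, pot g μ x ∂μ = energy g μ := by
    rw [energy, MeasureTheory.integral_prod _ hg_int]; rfl
  have hc : 2 * energy g μ + (∫ x, V x ∂μ) - cEq = 0 := by
    have h1 : ∫ x, (2 * pot g μ x + V x - cEq) ∂μ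
        = 2 * (∫ x, pot g μ x ∂μ) + (∫ x, V x ∂μ) - cEq := by
      have hI2 : Integrable (fun x => 2 * pot g μ x) μ := hpot_int.const_mul 2
      have hI : Integrable (fun x => 2 * pot g μ x + V x) μ := hI2.add hV_int
      rw [integral_sub hI (integrable_const cEq), integral_add hI2 hV_int, integral_const,
        MeasureTheory.integral_const_mul]
      simp
    rw [hζ_zero, hE] at h1
    linarith
  have hcEq : cEq = 2 * energy g μ + (∫ x, V x ∂μ) := by linarith
  set s := ∑ i, ∑ j, if i = j then 0 else g (X i - X j) with hs
  set p := ∑ i, pot g μ (X i) with hp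
  set w := ∑ i, V (X i) with hw
  have hsum : ∑ i, (2 * pot g μ (X i) + V (X i) - cEq) = 2 * p + w - N * cEq := by
    rw [Finset.sum_sub_distrib, Finset.sum_add_distrib, Finset.sum_const, Finset.card_univ,
      Fintype.card_fin, ← Finset.mul_sum]
    simp [mul_comm]
    rfl
  rw [Ham, FN, hsum, ← hs, ← hp, ← hw, hcEq]
  field_simp
  ring
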